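/- Consider the RAC-LoRA iteration with gradient-descent updates W^{t+1} = W^t − γ·H^t·∇f(W^t), where f : ℝ^{m×n} → ℝ is L-smooth and bounded below by f★, the H^t are i.i.d. random orthogonal projection matrices with λ_min^H := λ_min(E[H^t]) > 0, and 0 < γ ≤ 1/L. Then for every t, E[f(W^{t+1}) | W^t] − f★ ≤ (f(W^t) − f★) − (γ/2)·λ_min^H·‖∇f(W^t)‖_F². -/

import Mathlib

open Matrix MeasureTheory ProbabilityTheory

attribute [local instance] Matrix.frobeniusSeminormedAddCommGroup Matrix.frobeniusNormedAddCommGroup Matrix.frobeniusNormedSpace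

/-- The product measurable structure on matrices. -/
local instance matrixMeasurableSpace {a b : ℕ} : MeasurableSpace (Matrix (Fin a) (Fin b) ℝ) :=
  inferInstanceAs (MeasurableSpace ((Fin a) → (Fin b) → ℝ))

/-- Trace (Frobenius) inner product. -/
noncomputable def tinner {p q : ℕ} (X Y : Matrix (Fin p) (Fin q) ℝ) : ℝ := (Xᵀ * Y).trace

/-- `G` is the gradient field of `f` with respect to the trace inner product. -/
def IsGradient {p q : ℕ} (f : Matrix (Fin p) (Fin q) ℝ → ℝ)
    (G : Matrix (Fin p) (Fin q) ℝ → Matrix (Fin p) (Fin q) ℝ) : Prop :=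
  Differentiable ℝ f ∧ ∀ W V : Matrix (Fin p) (Fin q) ℝ, fderiv ℝ f W V = tinner (G W) V

/-- Lipschitz continuity (constant `L`) of a gradient field, in Frobenius norm. -/
def LipschitzGrad {p q : ℕ} (L : ℝ)
    (G : Matrix (Fin p) (Fin q) ℝ → Matrix (Fin p) (Fin q) ℝ) : Prop :=
  ∀ W V : Matrix (Fin p) (Fin q) ℝ, ‖G W - G V‖ ≤ L * ‖W - V‖

/-- Smallest eigenvalue of a (symmetric) real matrix, as the infimum of its real spectrum. -/
noncomputable def lamMin {k : ℕ} (A : Matrix (Fin k) (Fin k) ℝ) : ℝ := sInf (spectrum ℝ A)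

section aux
variable {p q : ℕ}

lemma tinner_eq_sum (A B : Matrix (Fin p) (Fin q) ℝ) :
    tinner A B = ∑ i, ∑ j, A i j * B i j := by
  rw [tinner, Finset.sum_comm (s := Finset.univ) (t := Finset.univ)
    (f := fun i j => A i j * B i j)]
  simp [Matrix.trace, Matrix.diag, Matrix.mul_apply]

lemma norm_sq_eq_sum (A : Matrix (Fin p) (Fin q) ℝ) :
    ‖A‖ ^ 2 = ∑ i, ∑ j, A i j ^ 2 := by
  rw [Matrix.frobenius_norm_def, ← Real.rpow_natCast _ 2, ← Real.rpow_mul (by positivity)]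
  norm_num

lemma tinner_self (A : Matrix (Fin p) (Fin q) ℝ) : tinner A A = ‖A‖ ^ 2 := by
  rw [tinner_eq_sum, norm_sq_eq_sum]; simp [sq]

lemma abs_tinner_le (A B : Matrix (Fin p) (Fin q) ℝ) : |tinner A B| ≤ ‖A‖ * ‖B‖ := by
  have h := Finset.sum_mul_sq_le_sq_mul_sq Finset.univ
    (fun x : Fin p × Fin q => A x.1 x.2) (fun x => B x.1 x.2)
  have h1 : tinner A B = ∑ x : Fin p × Fin q, A x.1 x.2 * B x.1 x.2 := by
    rw [tinner_eq_sum, Fintype.sum_prod_type]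
  have h2 : ‖A‖ ^ 2 = ∑ x : Fin p × Fin q, A x.1 x.2 ^ 2 := by
    rw [norm_sq_eq_sum, Fintype.sum_prod_type]
  have h3 : ‖B‖ ^ 2 = ∑ x : Fin p × Fin q, B x.1 x.2 ^ 2 := by
    rw [norm_sq_eq_sum, Fintype.sum_prod_type]
  have hA := norm_nonneg A; have hB := norm_nonneg B
  rw [← h1, ← h2, ← h3] at h
  nlinarith [sq_abs (tinner A B), abs_nonneg (tinner A B), mul_nonneg hA hB]

lemma tinner_le (A B : Matrix (Fin p) (Fin q) ℝ) : tinner A B ≤ ‖A‖ * ‖B‖ :=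
  (le_abs_self _).trans (abs_tinner_le A B)

lemma tinner_sub_left (A B C : Matrix (Fin p) (Fin q) ℝ) :
    tinner (A - B) C = tinner A C - tinner B C := by
  simp [tinner_eq_sum, sub_mul, Finset.sum_sub_distrib]

lemma tinner_add_right (A B C : Matrix (Fin p) (Fin q) ℝ) :
    tinner A (B + C) = tinner A B + tinner A C := by
  simp [tinner_eq_sum, mul_add, Finset.sum_add_distrib]

lemma tinner_smul_right (c : ℝ) (A B : Matrix (Fin p) (Fin q) ℝ) :
    tinner A (c • B) = c * tinner A B := by
  simp [tinner_eq_sum, Finset.mul_sum, mul_left_comm]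

lemma tinner_neg_right (A B : Matrix (Fin p) (Fin q) ℝ) :
    tinner A (-B) = -tinner A B := by
  simp [tinner_eq_sum, Finset.sum_neg_distrib]

end aux

section descent
variable {p q : ℕ} {f : Matrix (Fin p) (Fin q) ℝ → ℝ}
  {G : Matrix (Fin p) (Fin q) ℝ → Matrix (Fin p) (Fin q) ℝ} {L : ℝ}

lemma abs_descent (hL : 0 < L) (hgrad : IsGradient f G) (hlip : LipschitzGrad L G)
    (X D : Matrix (Fin p) (Fin q) ℝ) :
    |f (X + D) - f X - tinner (G X) D| ≤ L / 2 * ‖D‖ ^ 2 := by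
  set g' : ℝ → ℝ := fun t => tinner (G (X + t • D)) D with hg'
  have hderiv : ∀ t : ℝ, HasDerivAt (fun s : ℝ => f (X + s • D)) (g' t) t := by
    intro t
    have hα : HasDerivAt (fun s : ℝ => X + s • D) D t := by
      have h := ((hasDerivAt_id t).smul_const D).const_add X
      simp only [id_eq, one_smul] at h
      exact h
    have hf : HasFDerivAt f (fderiv ℝ f (X + t • D)) (X + t • D) :=
      (hgrad.1 _).hasFDerivAt
    have := hf.comp_hasDerivAt t hα
    exact this.congr_deriv (hgrad.2 _ _)
  have hg'lip : LipschitzWith (Real.toNNReal (L * ‖D‖ ^ 2)) g' := by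
    apply LipschitzWith.of_dist_le_mul
    intro a b
    rw [Real.dist_eq, Real.dist_eq, Real.coe_toNNReal _ (by positivity)]
    have h1 : g' a - g' b = tinner (G (X + a • D) - G (X + b • D)) D := by
      rw [tinner_sub_left]
    rw [h1]
    calc |tinner (G (X + a • D) - G (X + b • D)) D|
        ≤ ‖G (X + a • D) - G (X + b • D)‖ * ‖D‖ := abs_tinner_le _ _
      _ ≤ (L * ‖(X + a • D) - (X + b • D)‖) * ‖D‖ := by
          apply mul_le_mul_of_nonneg_right (hlip _ _) (norm_nonneg _)
      _ = L * ‖D‖ ^ 2 * |a - b| := by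
          have : (X + a • D) - (X + b • D) = (a - b) • D := by
            simp [sub_smul]
          rw [this, norm_smul, Real.norm_eq_abs]; ring
  have hcont : Continuous g' := hg'lip.continuous
  have hkey : f (X + D) - f X = ∫ t in (0:ℝ)..1, g' t := by
    have := intervalIntegral.integral_eq_sub_of_hasDerivAt
      (f := fun s : ℝ => f (X + s • D)) (f' := g')
      (fun t _ => hderiv t) (hcont.intervalIntegrable 0 1)
    rw [this]; simp
  have hg0 : g' 0 = tinner (G X) D := by simp [hg']
  have hsplit : f (X + D) - f X - tinner (G X) D = ∫ t in (0:ℝ)..1, (g' t - g' 0) := by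
    rw [intervalIntegral.integral_sub (hcont.intervalIntegrable 0 1)
      (intervalIntegrable_const), intervalIntegral.integral_const]
    rw [hkey, hg0]; simp
  rw [hsplit]
  have hb : ∀ t ∈ Set.Icc (0:ℝ) 1, |g' t - g' 0| ≤ L * ‖D‖ ^ 2 * t := by
    intro t ht
    have h1 : g' t - g' 0 = tinner (G (X + t • D) - G X) D := by
      rw [tinner_sub_left, hg0]
    rw [h1]
    calc |tinner (G (X + t • D) - G X) D|
        ≤ ‖G (X + t • D) - G X‖ * ‖D‖ := abs_tinner_le _ _
      _ ≤ (L * ‖(X + t • D) - X‖) * ‖D‖ :=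
          mul_le_mul_of_nonneg_right (hlip _ _) (norm_nonneg _)
      _ = L * ‖D‖ ^ 2 * t := by
          have : (X + t • D) - X = t • D := by abel
          rw [this, norm_smul, Real.norm_eq_abs, abs_of_nonneg ht.1]; ring
  calc |∫ t in (0:ℝ)..1, (g' t - g' 0)|
      ≤ ∫ t in (0:ℝ)..1, |g' t - g' 0| := by
        simpa [Real.norm_eq_abs] using
          intervalIntegral.norm_integral_le_integral_norm
            (f := fun t => g' t - g' 0) (a := 0) (b := 1) zero_le_one
    _ ≤ ∫ t in (0:ℝ)..1, L * ‖D‖ ^ 2 * t := by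
        apply intervalIntegral.integral_mono_on zero_le_one
        · exact ((hcont.sub continuous_const).abs).intervalIntegrable 0 1
        · exact (Continuous.intervalIntegrable (by continuity) 0 1)
        · exact hb
    _ = L / 2 * ‖D‖ ^ 2 := by
        rw [intervalIntegral.integral_const_mul, integral_id]
        ring

lemma descent_le (hL : 0 < L) (hgrad : IsGradient f G) (hlip : LipschitzGrad L G)
    (X D : Matrix (Fin p) (Fin q) ℝ) :
    f (X + D) ≤ f X + tinner (G X) D + L / 2 * ‖D‖ ^ 2 := by
  have := abs_le.1 (abs_descent hL hgrad hlip X D)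
  linarith [this.2]

end descent

section pointwise
variable {p q : ℕ} {f : Matrix (Fin p) (Fin q) ℝ → ℝ}
  {G : Matrix (Fin p) (Fin q) ℝ → Matrix (Fin p) (Fin q) ℝ} {L : ℝ}

lemma proj_tinner_eq (H : Matrix (Fin p) (Fin p) ℝ) (hsym : Hᵀ = H) (hidem : H * H = H)
    (A : Matrix (Fin p) (Fin q) ℝ) :
    tinner A (H * A) = ‖H * A‖ ^ 2 := by
  rw [← tinner_self, tinner, tinner]
  congr 1
  rw [Matrix.transpose_mul, hsym, Matrix.mul_assoc, ← Matrix.mul_assoc H H A, hidem]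

lemma proj_norm_le (H : Matrix (Fin p) (Fin p) ℝ) (hsym : Hᵀ = H) (hidem : H * H = H)
    (A : Matrix (Fin p) (Fin q) ℝ) :
    ‖H * A‖ ≤ ‖A‖ := by
  have h1 : ‖H * A‖ ^ 2 = tinner A (H * A) := (proj_tinner_eq H hsym hidem A).symm
  have h2 : tinner A (H * A) ≤ ‖A‖ * ‖H * A‖ := tinner_le _ _
  nlinarith [norm_nonneg (H * A), norm_nonneg A]

lemma pointwise_step (hL : 0 < L) (hgrad : IsGradient f G) (hlip : LipschitzGrad L G)
    {γ : ℝ} (hγ0 : 0 < γ) (hγ : γ ≤ 1 / L) (W : Matrix (Fin p) (Fin q) ℝ)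
    (H : Matrix (Fin p) (Fin p) ℝ) (hsym : Hᵀ = H) (hidem : H * H = H) :
    f (W - γ • (H * G W)) ≤ f W - γ / 2 * tinner (G W) (H * G W) := by
  set A := G W with hA
  set s := tinner A (H * A) with hs
  have hs_eq : s = ‖H * A‖ ^ 2 := proj_tinner_eq H hsym hidem A
  have hs_nonneg : 0 ≤ s := hs_eq ▸ sq_nonneg _
  have hD : W - γ • (H * A) = W + (-(γ • (H * A))) := by abel
  have h := descent_le hL hgrad hlip W (-(γ • (H * A)))
  rw [← hD] at h
  have h1 : tinner A (-(γ • (H * A))) = -(γ * s) := by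
    rw [tinner_neg_right, tinner_smul_right]
  have h2 : ‖-(γ • (H * A))‖ ^ 2 = γ ^ 2 * s := by
    rw [norm_neg, norm_smul, Real.norm_eq_abs, abs_of_nonneg hγ0.le, mul_pow, hs_eq]
  rw [← hA] at h
  rw [h1, h2] at h
  have hγL : γ * L ≤ 1 := by
    rw [le_div_iff₀ hL] at hγ; exact hγ
  have : L / 2 * (γ ^ 2 * s) ≤ γ / 2 * s := by
    nlinarith [mul_nonneg hγ0.le hs_nonneg]
  linarith

lemma pointwise_bound (hL : 0 < L) (hgrad : IsGradient f G) (hlip : LipschitzGrad L G)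
    {γ : ℝ} (hγ0 : 0 < γ) (W : Matrix (Fin p) (Fin q) ℝ)
    (H : Matrix (Fin p) (Fin p) ℝ) (hsym : Hᵀ = H) (hidem : H * H = H) :
    |f (W - γ • (H * G W))| ≤ |f W| + γ * ‖G W‖ ^ 2 + L / 2 * (γ * ‖G W‖) ^ 2 := by
  set A := G W with hA
  have hD : W - γ • (H * A) = W + (-(γ • (H * A))) := by abel
  have h := abs_descent hL hgrad hlip W (-(γ • (H * A)))
  rw [← hD, ← hA] at h
  have hDn : ‖-(γ • (H * A))‖ = γ * ‖H * A‖ := by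
    rw [norm_neg, norm_smul, Real.norm_eq_abs, abs_of_nonneg hγ0.le]
  have hHA : ‖H * A‖ ≤ ‖A‖ := proj_norm_le H hsym hidem A
  have ht : |tinner A (-(γ • (H * A)))| ≤ γ * ‖A‖ ^ 2 := by
    calc |tinner A (-(γ • (H * A)))| ≤ ‖A‖ * ‖-(γ • (H * A))‖ := abs_tinner_le _ _
      _ = ‖A‖ * (γ * ‖H * A‖) := by rw [hDn]
      _ ≤ ‖A‖ * (γ * ‖A‖) := by
          apply mul_le_mul_of_nonneg_left _ (norm_nonneg _)
          exact mul_le_mul_of_nonneg_left hHA hγ0.le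
      _ = γ * ‖A‖ ^ 2 := by ring
  have hnsq : ‖-(γ • (H * A))‖ ^ 2 ≤ (γ * ‖A‖) ^ 2 := by
    rw [hDn]
    apply pow_le_pow_left₀ (by positivity)
    exact mul_le_mul_of_nonneg_left hHA hγ0.le
  have := abs_le.1 h
  have habs := abs_le.1 (le_refl |f W|) -- dummy
  have h1 : f (W - γ • (H * A)) - f W - tinner A (-(γ • (H * A))) ≤ L / 2 * ‖-(γ • (H * A))‖ ^ 2 := this.2
  have h2 : -(L / 2 * ‖-(γ • (H * A))‖ ^ 2) ≤ f (W - γ • (H * A)) - f W - tinner A (-(γ • (H * A))) := this.1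
  have hL2 : L / 2 * ‖-(γ • (H * A))‖ ^ 2 ≤ L / 2 * (γ * ‖A‖) ^ 2 :=
    mul_le_mul_of_nonneg_left hnsq (by positivity)
  have ht' := abs_le.1 ht
  rw [abs_le]
  constructor <;> [nlinarith [neg_abs_le (f W), le_abs_self (f W)];
    nlinarith [neg_abs_le (f W), le_abs_self (f W)]]

end pointwise

section rayleigh
open RealInnerProductSpace
variable {k : ℕ}

lemma rayleigh_vec (M : Matrix (Fin k) (Fin k) ℝ) (hM : M.IsHermitian) (x : Fin k → ℝ) :
    lamMin M * (∑ i, x i ^ 2) ≤ x ⬝ᵥ (M *ᵥ x) := by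
  classical
  have hT : (Matrix.toEuclideanLin M).IsSymmetric :=
    (Matrix.isHermitian_iff_isSymmetric).1 hM
  set T := Matrix.toEuclideanLin M with hTdef
  have hn : Module.finrank ℝ (EuclideanSpace ℝ (Fin k)) = k := finrank_euclideanSpace_fin
  set B := hT.eigenvectorBasis hn with hB
  set μ := hT.eigenvalues hn with hμ
  set v : EuclideanSpace ℝ (Fin k) := (WithLp.equiv 2 _).symm x with hv
  -- spectrum facts
  have hspec : ∀ i, lamMin M ≤ μ i := by
    intro i
    have h1 : μ i ∈ spectrum ℝ T := (hT.hasEigenvalue_eigenvalues hn i).mem_spectrum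
    rw [hTdef, Matrix.spectrum_toEuclideanLin (A := M)] at h1
    exact csInf_le M.finite_spectrum.bddBelow h1
  -- inner products
  have hrep : ∀ (w : EuclideanSpace ℝ (Fin k)) (i), B.repr w i = ⟪B i, w⟫ :=
    fun w i => B.repr_apply_apply w i
  have hTv : ∀ i, ⟪B i, T v⟫ = μ i * B.repr v i := by
    intro i
    rw [← hT (B i) v, hT.apply_eigenvectorBasis hn i, inner_smul_left, hrep]
    simp
    rfl
  have hvT : ⟪v, T v⟫ = ∑ i, μ i * (B.repr v i) ^ 2 := by
    nth_rewrite 1 [← B.sum_repr v]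
    rw [sum_inner]
    congr 1; ext i
    rw [real_inner_smul_left, hTv]
    ring
  have hnv : ⟪v, v⟫ = ∑ i, (B.repr v i) ^ 2 := by
    nth_rewrite 1 [← B.sum_repr v]
    rw [sum_inner]
    congr 1; ext i
    rw [real_inner_smul_left, hrep]
    ring
  have hdot : x ⬝ᵥ (M *ᵥ x) = ⟪v, T v⟫ := by
    rw [hTdef, hv, WithLp.equiv_symm_apply, Matrix.toEuclideanLin_apply_piLp_toLp]
    simp [PiLp.inner_apply, dotProduct, RCLike.inner_apply, mul_comm]
  have hsum : ∑ i, x i ^ 2 = ⟪v, v⟫ := by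
    rw [hv, WithLp.equiv_symm_apply, PiLp.inner_apply]
    simp [RCLike.inner_apply, sq]
  rw [hdot, hvT, hsum, hnv, Finset.mul_sum]
  apply Finset.sum_le_sum
  intro i _
  exact mul_le_mul_of_nonneg_right (hspec i) (sq_nonneg _)

end rayleigh

section mat
variable {p q : ℕ}

lemma isHermitian_of_transpose {k : ℕ} (M : Matrix (Fin k) (Fin k) ℝ) (h : Mᵀ = M) :
    M.IsHermitian := by
  show Mᴴ = M
  ext i j
  simp only [Matrix.conjTranspose_apply, star_trivial]
  exact congrFun (congrFun h i) j

lemma rayleigh_mat (M : Matrix (Fin p) (Fin p) ℝ) (hM : Mᵀ = M)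
    (A : Matrix (Fin p) (Fin q) ℝ) :
    lamMin M * ‖A‖ ^ 2 ≤ tinner A (M * A) := by
  have hH : M.IsHermitian := isHermitian_of_transpose M hM
  have hcol : tinner A (M * A) = ∑ j, (fun i => A i j) ⬝ᵥ (M *ᵥ fun i => A i j) := by
    simp [tinner, Matrix.trace, Matrix.diag, Matrix.mul_apply, dotProduct,
      Matrix.mulVec]
  have hnorm : ‖A‖ ^ 2 = ∑ j, ∑ i, A i j ^ 2 := by
    rw [norm_sq_eq_sum, Finset.sum_comm]
  rw [hcol, hnorm, Finset.mul_sum]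
  exact Finset.sum_le_sum fun j _ => rayleigh_vec M hH fun i => A i j

noncomputable def quadLM (A : Matrix (Fin p) (Fin q) ℝ) :
    Matrix (Fin p) (Fin p) ℝ →ₗ[ℝ] ℝ where
  toFun B := tinner A (B * A)
  map_add' B C := by rw [Matrix.add_mul, tinner_add_right]
  map_smul' c B := by rw [Matrix.smul_mul, tinner_smul_right]; rfl

noncomputable def quadCLM (A : Matrix (Fin p) (Fin q) ℝ) :
    Matrix (Fin p) (Fin p) ℝ →L[ℝ] ℝ :=
  LinearMap.toContinuousLinearMap (quadLM A)

@[simp] lemma quadCLM_apply (A : Matrix (Fin p) (Fin q) ℝ) (B : Matrix (Fin p) (Fin p) ℝ) :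
    quadCLM A B = tinner A (B * A) := rfl

noncomputable def evalCLM (i : Fin p) (j : Fin q) :
    Matrix (Fin p) (Fin q) ℝ →L[ℝ] ℝ :=
  LinearMap.toContinuousLinearMap
    { toFun := fun B : Matrix (Fin p) (Fin q) ℝ => B i j
      map_add' := fun _ _ => rfl
      map_smul' := fun _ _ => rfl }

@[simp] lemma evalCLM_apply (i : Fin p) (j : Fin q) (B : Matrix (Fin p) (Fin q) ℝ) :
    evalCLM i j B = B i j := rfl

end mat

/-- RAC-LoRA with GD updates, one step: conditionally on `W^t = W`, the expectation over the
fresh (independent) random projection `H` of `f` at the next iterate decreases.  -/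
theorem stmt6 {p q : ℕ} {Ω : Type*} [MeasurableSpace Ω] (μ : Measure Ω) [IsProbabilityMeasure μ]
    (f : Matrix (Fin p) (Fin q) ℝ → ℝ) (G : Matrix (Fin p) (Fin q) ℝ → Matrix (Fin p) (Fin q) ℝ)
    (L fstar : ℝ) (hL : 0 < L) (hgrad : IsGradient f G) (hlip : LipschitzGrad L G)
    (hbelow : ∀ W, fstar ≤ f W)
    (H : Ω → Matrix (Fin p) (Fin p) ℝ) (hmeas : Measurable H) (hInt : @Integrable _
      (Matrix.frobeniusNormedAddCommGroup (m := Fin p) (n := Fin p) (α := ℝ)).toUniformSpace.toTopologicalSpace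
      _ _ _ H μ)
    (hproj : ∀ᵐ ω ∂μ, (H ω)ᵀ = H ω ∧ H ω * H ω = H ω)
    (hlam : 0 < lamMin (∫ ω, H ω ∂μ))
    (γ : ℝ) (hγ0 : 0 < γ) (hγ : γ ≤ 1 / L) (W : Matrix (Fin p) (Fin q) ℝ) :
    (∫ ω, f (W - γ • (H ω * G W)) ∂μ) - fstar ≤
      (f W - fstar) - (γ / 2) * lamMin (∫ ω, H ω ∂μ) * ‖G W‖ ^ 2 := by
  set A := G W with hA
  set M := ∫ ω, H ω ∂μ with hM
  -- entries of the mean matrix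
  have hent : ∀ (i j : Fin p), M i j = ∫ ω, H ω i j ∂μ := by
    intro i j
    have h := (evalCLM i j).integral_comp_comm hInt
    exact h.symm
  -- symmetry of the mean matrix
  have hMsym : Mᵀ = M := by
    ext i j
    rw [Matrix.transpose_apply, hent, hent]
    apply integral_congr_ae
    filter_upwards [hproj] with ω hω
    have h2 := congrFun (congrFun hω.1 i) j
    simpa using h2
  -- measurability of the integrand
  have hfc : Continuous f := hgrad.1.continuous
  have hlin_cont : Continuous
      (fun x : Fin p → Fin q → ℝ => (Matrix.of x : Matrix (Fin p) (Fin q) ℝ)) := by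
    let lin : (Fin p → Fin q → ℝ) →ₗ[ℝ] Matrix (Fin p) (Fin q) ℝ :=
      { toFun := fun x => Matrix.of x
        map_add' := fun _ _ => rfl
        map_smul' := fun _ _ => rfl }
    exact lin.continuous_of_finiteDimensional
  have hfmeas : Measurable (fun x : Fin p → Fin q → ℝ => f (Matrix.of x)) :=
    (hfc.comp hlin_cont).measurable
  have hm : Measurable (fun ω => W - γ • (H ω * A)) := by
    apply measurable_pi_lambda
    intro i
    apply measurable_pi_lambda
    intro j
    have : (fun ω => (W - γ • (H ω * A)) i j)
        = fun ω => W i j - γ * ∑ k, H ω i k * A k j := by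
      funext ω
      simp [Matrix.sub_apply, Matrix.smul_apply, Matrix.mul_apply]
    rw [this]
    apply Measurable.sub measurable_const
    apply Measurable.const_mul
    apply Finset.measurable_sum
    intro k _
    exact ((measurable_pi_apply k).comp ((measurable_pi_apply i).comp hmeas)).mul_const _
  have hcomp : Measurable (fun ω => f (W - γ • (H ω * A))) := hfmeas.comp hm
  -- integrability of the LHS
  have hbdd : ∀ᵐ ω ∂μ, |f (W - γ • (H ω * A))| ≤ |f W| + γ * ‖A‖ ^ 2 + L / 2 * (γ * ‖A‖) ^ 2 := by
    filter_upwards [hproj] with ω hω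
    exact pointwise_bound hL hgrad hlip hγ0 W (H ω) hω.1 hω.2
  have hint1 : Integrable (fun ω => f (W - γ • (H ω * A))) μ := by
    refine Integrable.mono' (integrable_const (|f W| + γ * ‖A‖ ^ 2 + L / 2 * (γ * ‖A‖) ^ 2))
      hcomp.aestronglyMeasurable ?_
    simpa [Real.norm_eq_abs] using hbdd
  -- the quadratic form CLM
  have hφint : Integrable (fun ω => quadCLM A (H ω)) μ := (quadCLM A).integrable_comp hInt
  have hφeq : ∫ ω, quadCLM A (H ω) ∂μ = quadCLM A M := (quadCLM A).integral_comp_comm hInt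
  have hmono : (∫ ω, f (W - γ • (H ω * A)) ∂μ)
      ≤ ∫ ω, (f W - γ / 2 * quadCLM A (H ω)) ∂μ := by
    apply integral_mono_ae hint1 ((integrable_const _).sub (hφint.const_mul _))
    filter_upwards [hproj] with ω hω
    simpa using pointwise_step hL hgrad hlip hγ0 hγ W (H ω) hω.1 hω.2
  have hrhs : ∫ ω, (f W - γ / 2 * quadCLM A (H ω)) ∂μ = f W - γ / 2 * quadCLM A M := by
    rw [integral_sub (integrable_const _) (hφint.const_mul _), integral_const_mul, hφeq]
    simp
  have hray : lamMin M * ‖A‖ ^ 2 ≤ quadCLM A M := by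
    rw [quadCLM_apply]
    exact rayleigh_mat M hMsym A
  have hscaled : γ / 2 * (lamMin M * ‖A‖ ^ 2) ≤ γ / 2 * quadCLM A M :=
    mul_le_mul_of_nonneg_left hray (by linarith)
  have := hmono.trans_eq hrhs
  nlinarith [this, hscaled]
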